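/- arXiv:2005.05562 — 5 statements merged into one kernel-verified Lean document; each statement's English description precedes it below -/
import Mathlib

section
/- Let P ∈ ℝ^{p×d} and Q ∈ ℝ^{q×d} be matrices such that rank(Q) = r_Q and rank([P; Q]) = r. Then there exist matrices S ∈ ℝ^{(r−r_Q)×p}, Z¹ ∈ ℝ^{(p−r+r_Q)×p}, Z² ∈ ℝ^{(p−r+r_Q)×q} such that: (i) the square matrix [S; Z¹] ∈ ℝ^{p×p} is orthogonal; (ii) Z¹P + Z²Q = 0; (iii) SP has full row rank and the pair (SP, Q) has no hidden redundancy, i.e., rank([SP; Q]) = rank(SP) + rank(Q). -/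
open Matrix Submodule Module

private lemma vecMul_eq_sum' {m n : ℕ} (v : Fin m → ℝ) (M : Matrix (Fin m) (Fin n) ℝ) :
    v ᵥ* M = ∑ i, v i • M i := by
  ext j; simp [Matrix.vecMul, dotProduct, Finset.sum_apply]

/-- Removal of hidden redundancy: given `P`, `Q` with `rank Q = rQ` and
`rank [P; Q] = r`, there are `S`, `Z¹`, `Z²` with `[S; Z¹]` orthogonal,
`Z¹P + Z²Q = 0`, `SP` of full row rank, and `(SP, Q)` without hidden redundancy. -/
theorem removal_of_hidden_redundancy
    (p q d rQ r : ℕ) (P : Matrix (Fin p) (Fin d) ℝ) (Q : Matrix (Fin q) (Fin d) ℝ)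
    (hQ : Q.rank = rQ) (hPQ : (Matrix.fromRows P Q).rank = r) :
    ∃ (S : Matrix (Fin (r - rQ)) (Fin p) ℝ)
      (Z1 : Matrix (Fin (p - (r - rQ))) (Fin p) ℝ)
      (Z2 : Matrix (Fin (p - (r - rQ))) (Fin q) ℝ),
      (Matrix.fromRows S Z1) * (Matrix.fromRows S Z1)ᵀ = 1 ∧
      (Matrix.fromRows S Z1)ᵀ * (Matrix.fromRows S Z1) = 1 ∧
      Z1 * P + Z2 * Q = 0 ∧
      (S * P).rank = r - rQ ∧
      (Matrix.fromRows (S * P) Q).rank = (S * P).rank + Q.rank := by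
  classical
  set RP : Submodule ℝ (Fin d → ℝ) := span ℝ (Set.range P) with hRPdef
  set RQ : Submodule ℝ (Fin d → ℝ) := span ℝ (Set.range Q) with hRQdef
  have hRQ : finrank ℝ RQ = rQ := by rw [← hQ, rank_eq_finrank_span_row, Matrix.row]
  have hSup : finrank ℝ (RP ⊔ RQ : Submodule ℝ (Fin d → ℝ)) = r := by
    rw [← hPQ, rank_eq_finrank_span_row, Matrix.row]
    have : Set.range (Matrix.fromRows P Q) = Set.range P ∪ Set.range Q := by
      rw [show (Matrix.fromRows P Q : Fin p ⊕ Fin q → Fin d → ℝ) = Sum.elim P Q from rfl]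
      exact Set.Sum.elim_range P Q
    rw [this, Submodule.span_union]
  set E := EuclideanSpace ℝ (Fin p) with hEdef
  set e : E ≃ₗ[ℝ] (Fin p → ℝ) := WithLp.linearEquiv 2 ℝ (Fin p → ℝ) with hedef
  set f : E →ₗ[ℝ] (Fin d → ℝ) ⧸ RQ := (RQ.mkQ ∘ₗ P.vecMulLinear) ∘ₗ e.toLinearMap with hfdef
  have hfapp : ∀ x : E, f x = RQ.mkQ (e x ᵥ* P) := fun x => rfl
  have hrange : LinearMap.range f = RP.map RQ.mkQ := by
    rw [hfdef, LinearMap.range_comp, LinearEquiv.range, Submodule.map_top, LinearMap.range_comp,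
      range_vecMulLinear, Matrix.row]
  -- finrank of range f = r - rQ
  set f' : (RP ⊔ RQ : Submodule ℝ (Fin d → ℝ)) →ₗ[ℝ] (Fin d → ℝ) ⧸ RQ :=
    RQ.mkQ ∘ₗ (RP ⊔ RQ : Submodule ℝ (Fin d → ℝ)).subtype with hf'def
  have hrange' : LinearMap.range f' = LinearMap.range f := by
    rw [hrange, hf'def, LinearMap.range_comp, Submodule.range_subtype, Submodule.map_sup,
      Submodule.mkQ_map_self, sup_bot_eq]
  have hker' : finrank ℝ (LinearMap.ker f') = rQ := by
    have hle : RQ ≤ RP ⊔ RQ := le_sup_right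
    have : LinearMap.ker f' = Submodule.comap (RP ⊔ RQ : Submodule ℝ (Fin d → ℝ)).subtype RQ := by
      rw [hf'def, LinearMap.ker_comp, Submodule.ker_mkQ]
    rw [this, ← hRQ]
    exact LinearEquiv.finrank_eq (Submodule.comapSubtypeEquivOfLe hle)
  have hrnf' := LinearMap.finrank_range_add_finrank_ker f'
  rw [hSup, hrange', hker'] at hrnf'
  have hrQr : rQ ≤ r := by omega
  have hrankf : finrank ℝ (LinearMap.range f) = r - rQ := by omega
  -- the kernel and its orthogonal complement
  set K : Submodule ℝ E := LinearMap.ker f with hKdef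
  have hrnf : finrank ℝ (LinearMap.range f) + finrank ℝ K = p := by
    rw [LinearMap.finrank_range_add_finrank_ker f, finrank_euclideanSpace_fin]
  rw [hrankf] at hrnf
  have horth := K.finrank_add_finrank_orthogonal
  rw [finrank_euclideanSpace_fin] at horth
  have hKperp : finrank ℝ Kᗮ = r - rQ := by omega
  have hK : finrank ℝ K = p - (r - rQ) := by omega
  have hsum : (r - rQ) + (p - (r - rQ)) = p := by omega
  -- orthonormal bases
  set bS : OrthonormalBasis (Fin (r - rQ)) ℝ Kᗮ :=
    (stdOrthonormalBasis ℝ Kᗮ).reindex (finCongr hKperp) with hbSdef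
  set bZ : OrthonormalBasis (Fin (p - (r - rQ))) ℝ K :=
    (stdOrthonormalBasis ℝ K).reindex (finCongr hK) with hbZdef
  set S : Matrix (Fin (r - rQ)) (Fin p) ℝ := Matrix.of fun i j => e (bS i : E) j with hSdef
  set Z1 : Matrix (Fin (p - (r - rQ))) (Fin p) ℝ := Matrix.of fun i j => e (bZ i : E) j
    with hZ1def
  have hSrow : ∀ i, S i = e (bS i : E) := fun i => rfl
  have hZ1row : ∀ i, Z1 i = e (bZ i : E) := fun i => rfl
  -- the rows as vectors in E
  set u : Fin (r - rQ) ⊕ Fin (p - (r - rQ)) → E :=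
    Sum.elim (fun i => (bS i : E)) (fun i => (bZ i : E)) with hudef
  have hurow : ∀ i, (Matrix.fromRows S Z1) i = e (u i) := by
    rintro (i | i) <;> rfl
  have huorth : ∀ i j, inner ℝ (u i) (u j) = if i = j then (1:ℝ) else 0 := by
    rintro (i | i) (j | j)
    · rw [hudef]
      simp only [Sum.elim_inl]
      rw [← Submodule.coe_inner, orthonormal_iff_ite.mp bS.orthonormal i j]
      simp [Sum.inl.injEq]
    · simp only [hudef, Sum.elim_inl, Sum.elim_inr, reduceCtorEq, if_false]
      exact Submodule.inner_left_of_mem_orthogonal (bZ j).2 (bS i).2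
    · simp only [hudef, Sum.elim_inl, Sum.elim_inr, reduceCtorEq, if_false]
      exact Submodule.inner_right_of_mem_orthogonal (bZ i).2 (bS j).2
    · rw [hudef]
      simp only [Sum.elim_inr]
      rw [← Submodule.coe_inner, orthonormal_iff_ite.mp bZ.orthonormal i j]
      simp [Sum.inr.injEq]
  have hMMT : (Matrix.fromRows S Z1) * (Matrix.fromRows S Z1)ᵀ = 1 := by
    ext i j
    rw [Matrix.mul_apply, Matrix.one_apply]
    have := huorth i j
    rw [PiLp.inner_apply] at this
    simp only [RCLike.inner_apply, starRingEnd_apply, star_trivial] at this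
    rw [← this]
    refine Finset.sum_congr rfl fun k _ => ?_
    rw [Matrix.transpose_apply, hurow i, hurow j]
    exact mul_comm _ _
  have hMTM : (Matrix.fromRows S Z1)ᵀ * (Matrix.fromRows S Z1) = 1 :=
    (mul_eq_one_comm_of_equiv (finSumFinEquiv.trans (finCongr hsum))).mp hMMT
  -- rows of Z1 are killed modulo RQ
  have hZ1P : ∀ i, ∃ y : Fin q → ℝ, y ᵥ* Q = e (bZ i : E) ᵥ* P := by
    intro i
    have h0 : f (bZ i : E) = 0 := (bZ i).2
    rw [hfapp, Submodule.mkQ_apply, Submodule.Quotient.mk_eq_zero] at h0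
    rw [hRQdef, show Set.range Q = Set.range Q.row from rfl, ← range_vecMulLinear] at h0
    obtain ⟨y, hy⟩ := h0
    exact ⟨y, hy⟩
  set Z2 : Matrix (Fin (p - (r - rQ))) (Fin q) ℝ :=
    Matrix.of fun i => -(Classical.choose (hZ1P i)) with hZ2def
  have h2 : Z1 * P + Z2 * Q = 0 := by
    ext i j
    have hy : Classical.choose (hZ1P i) ᵥ* Q = e (bZ i : E) ᵥ* P := Classical.choose_spec (hZ1P i)
    have e1 : (Z1 * P) i j = (e (bZ i : E) ᵥ* P) j := by
      rw [Matrix.mul_apply]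
      simp only [Matrix.vecMul, dotProduct]
      rfl
    have e2 : (Z2 * Q) i j = -((Classical.choose (hZ1P i)) ᵥ* Q) j := by
      rw [Matrix.mul_apply]
      simp only [Matrix.vecMul, dotProduct, hZ2def, Matrix.of_apply, Pi.neg_apply, neg_mul,
        Finset.sum_neg_distrib]
    rw [Matrix.add_apply, e1, e2, hy, Matrix.zero_apply]
    ring
  -- combinations of rows of S
  have hxS : ∀ c : Fin (r - rQ) → ℝ, e (∑ i, c i • (bS i : E)) = c ᵥ* S := by
    intro c
    rw [map_sum, vecMul_eq_sum']
    exact Finset.sum_congr rfl fun i _ => by rw [_root_.map_smul, hSrow]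
  have hxperp : ∀ c : Fin (r - rQ) → ℝ, (∑ i, c i • (bS i : E)) ∈ Kᗮ :=
    fun c => sum_mem fun i _ => smul_mem _ _ (bS i).2
  have hzero : ∀ c : Fin (r - rQ) → ℝ, (c ᵥ* S) ᵥ* P ∈ RQ → (∑ i, c i • (bS i : E)) = 0 := by
    intro c hc
    have hxK : (∑ i, c i • (bS i : E)) ∈ K := by
      refine LinearMap.mem_ker.mpr ?_
      rw [hfapp, hxS c, Submodule.mkQ_apply, Submodule.Quotient.mk_eq_zero]
      exact hc
    exact Submodule.disjoint_def.mp K.orthogonal_disjoint _ hxK (hxperp c)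
  have hindS : LinearIndependent ℝ (fun i => (bS i : E)) :=
    bS.orthonormal.linearIndependent.map' Kᗮ.subtype (Submodule.ker_subtype _)
  -- rank of S * P
  have hlin : LinearIndependent ℝ (fun i => (S * P) i) := by
    rw [Fintype.linearIndependent_iff]
    intro c hc
    have hc' : (c ᵥ* S) ᵥ* P = 0 := by
      rw [vecMul_vecMul, vecMul_eq_sum']
      exact hc
    have hx0 := hzero c (by rw [hc']; exact zero_mem RQ)
    exact Fintype.linearIndependent_iff.mp hindS c hx0
  have hrankSP : (S * P).rank = r - rQ := by
    rw [hlin.rank_matrix, Fintype.card_fin]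
  -- no hidden redundancy
  have hinf : (span ℝ (Set.range (S * P)) ⊓ RQ : Submodule ℝ (Fin d → ℝ)) = ⊥ := by
    rw [eq_bot_iff]
    rintro v ⟨hv1, hv2⟩
    rw [show Set.range (S * P) = Set.range (S * P).row from rfl, ← range_vecMulLinear] at hv1
    obtain ⟨y, hy⟩ := hv1
    rw [Matrix.vecMulLinear_apply, ← vecMul_vecMul] at hy
    have hx0 := hzero y (by rw [hy]; exact hv2)
    have : e (∑ i, y i • (bS i : E)) ᵥ* P = v := by rw [hxS y, hy]
    rw [← this, hx0, map_zero, Matrix.zero_vecMul]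
    exact Submodule.mem_bot ℝ |>.mpr rfl
  have hfinal : (Matrix.fromRows (S * P) Q).rank = (S * P).rank + Q.rank := by
    rw [rank_eq_finrank_span_row, (S * P).rank_eq_finrank_span_row, Q.rank_eq_finrank_span_row]
    unfold Matrix.row
    have hU : Set.range (Matrix.fromRows (S * P) Q) = Set.range (S * P) ∪ Set.range Q := by
      rw [show (Matrix.fromRows (S * P) Q : _ → Fin d → ℝ) = Sum.elim (S * P) Q from rfl]
      exact Set.Sum.elim_range _ _
    rw [hU, Submodule.span_union, ← hRQdef]
    have hh := Submodule.finrank_sup_add_finrank_inf_eq (span ℝ (Set.range (S * P))) RQ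
    rw [hinf, finrank_bot] at hh
    omega
  exact ⟨S, Z1, Z2, hMMT, hMTM, h2, hrankSP, hfinal⟩
end

section
/- Let P ∈ ℝ^{p×d} and Q ∈ ℝ^{q×d} both have full row rank with p + q ≤ d, and let G ∈ ℝ^{q×d} be arbitrary. Then there exists a matrix F ∈ ℝ^{d×d} such that the stacked matrix [P; G + QF] ∈ ℝ^{(p+q)×d} has full row rank. -/
open Matrix

/-- If `P`, `Q` have full row rank, `p + q ≤ d`, and `G` is arbitrary, then there is
`F ∈ ℝ^{d×d}` such that `[P; G + QF]` has full row rank. -/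
theorem exists_F_stacked_full_row_rank_with_G
    (p q d : ℕ) (hpq : p + q ≤ d)
    (P : Matrix (Fin p) (Fin d) ℝ) (Q : Matrix (Fin q) (Fin d) ℝ)
    (G : Matrix (Fin q) (Fin d) ℝ)
    (hP : P.rank = p) (hQ : Q.rank = q) :
    ∃ F : Matrix (Fin d) (Fin d) ℝ,
      (Matrix.fromRows P (G + Q * F)).rank = p + q := by
  classical
  -- Step 1: right inverse of Q
  have hQsurj : Function.Surjective Q.mulVecLin := by
    rw [← LinearMap.range_eq_top]
    apply Submodule.eq_top_of_finrank_eq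
    rw [← Matrix.rank, hQ]
    simp [Module.finrank_fintype_fun_eq_card]
  choose v hv using fun j : Fin q => hQsurj (Pi.single j 1)
  set R : Matrix (Fin d) (Fin q) ℝ := Matrix.of (fun i j => v j i) with hR
  have hQR : Q * R = 1 := by
    ext i j
    have := congrFun (hv j) i
    simp only [Matrix.mulVecLin_apply, Matrix.mulVec, dotProduct] at this
    simp only [Matrix.mul_apply, hR, Matrix.of_apply, Matrix.one_apply]
    rw [this, Pi.single_apply]
  -- Step 2: rows of P are linearly independent
  have hPli : LinearIndependent ℝ P := by
    change LinearIndependent ℝ P.row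
    rw [linearIndependent_iff_card_eq_finrank_span]
    rw [Set.finrank, ← Matrix.rank_eq_finrank_span_row, hP, Fintype.card_fin]
  -- Step 3: complement of row span of P
  set W : Submodule ℝ (Fin d → ℝ) := Submodule.span ℝ (Set.range P) with hW
  obtain ⟨W', hWc⟩ := Submodule.exists_isCompl W
  have hfinW : Module.finrank ℝ W = p := by
    rw [hW]; exact (Matrix.rank_eq_finrank_span_row P).symm.trans hP
  have hfinW' : q ≤ Module.finrank ℝ W' := by
    have := Submodule.finrank_add_eq_of_isCompl hWc
    rw [hfinW] at this
    rw [Module.finrank_fintype_fun_eq_card, Fintype.card_fin] at this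
    omega
  obtain ⟨g, hg⟩ := exists_linearIndependent_of_le_finrank hfinW'
  have hgli : LinearIndependent ℝ (fun i => (g i : Fin d → ℝ)) :=
    hg.map' W'.subtype (Submodule.ker_subtype W')
  -- Step 4: combined rows independent
  have hsum : LinearIndependent ℝ (Sum.elim P (fun i => (g i : Fin d → ℝ))) := by
    apply hPli.sum_type hgli
    apply Disjoint.mono le_rfl _ hWc.disjoint
    rw [Submodule.span_le]
    rintro x ⟨i, rfl⟩
    exact (g i).2
  -- Step 5: choose F so that G + Q * F = B
  set B : Matrix (Fin q) (Fin d) ℝ := Matrix.of (fun i j => (g i : Fin d → ℝ) j) with hB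
  refine ⟨R * (B - G), ?_⟩
  have hGF : G + Q * (R * (B - G)) = B := by
    rw [← Matrix.mul_assoc, hQR, Matrix.one_mul]
    abel
  rw [hGF]
  have : (Matrix.fromRows P B) = Matrix.of (Sum.elim P (fun i => (g i : Fin d → ℝ))) := by
    ext (i | i) j <;> rfl
  rw [this]
  have := LinearIndependent.rank_matrix (M := Matrix.of (Sum.elim P (fun i => (g i : Fin d → ℝ)))) hsum
  rw [this]
  simp
end

section
/- Consider the strangeness-free system: for all n ≥ n₀, Â₁(n)x(n+2) + B̂₁(n)x(n+1) + Ĉ₁(n)x(n) = g₁(n); B̂₂(n)x(n+1) + Ĉ₂(n)x(n) = g₂(n); Ĉ₃(n)x(n) = g₃(n); 0 = g₄(n), where for every n the stacked matrix [Â₁(n); B̂₂(n+1); Ĉ₃(n+2)] ∈ ℝ^{(r₂+r₁+r₀)×d} is square (r₂+r₁+r₀ = d) and invertible. Then for any initial values x₀, x₁ ∈ ℝ^d satisfying the consistency conditions B̂₂(n₀)x₁ + Ĉ₂(n₀)x₀ = g₂(n₀) and Ĉ₃(n₀)x₀ = g₃(n₀) and Ĉ₃(n₀+1)x₁ = g₃(n₀+1),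 and assuming g₄(n) = 0 for all n, there exists a unique sequence x : ℕ → ℝ^d with x(n₀) = x₀, x(n₀+1) = x₁ solving the system for all n ≥ n₀. -/
open Matrix

/-- The canonical equivalence `Fin r₂ ⊕ (Fin r₁ ⊕ Fin r₀) ≃ Fin d` when
`r₂ + r₁ + r₀ = d`. -/
def blockEquiv (r₂ r₁ r₀ d : ℕ) (h : r₂ + r₁ + r₀ = d) :
    (Fin r₂ ⊕ (Fin r₁ ⊕ Fin r₀)) ≃ Fin d :=
  ((Equiv.refl (Fin r₂)).sumCongr finSumFinEquiv).trans
    (finSumFinEquiv.trans (finCongr (by omega)))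

/-- Unique solvability of the initial value problem for a strangeness-free
second order singular difference equation with square invertible stacked matrix
`[Â₁(n); B̂₂(n+1); Ĉ₃(n+2)]`, given consistent initial values and zero redundant
part. -/
theorem strangeness_free_ivp_unique_solution
    (d r₂ r₁ r₀ v n₀ : ℕ) (hd : r₂ + r₁ + r₀ = d)
    (A₁ B₁ C₁ : ℕ → Matrix (Fin r₂) (Fin d) ℝ)
    (B₂ C₂ : ℕ → Matrix (Fin r₁) (Fin d) ℝ)
    (C₃ : ℕ → Matrix (Fin r₀) (Fin d) ℝ)
    (g₁ : ℕ → Fin r₂ → ℝ) (g₂ : ℕ → Fin r₁ → ℝ) (g₃ : ℕ → Fin r₀ → ℝ)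
    (g₄ : ℕ → Fin v → ℝ)
    (hinv : ∀ n, n₀ ≤ n → IsUnit
      ((Matrix.fromRows (A₁ n) (Matrix.fromRows (B₂ (n + 1)) (C₃ (n + 2)))).submatrix
        (blockEquiv r₂ r₁ r₀ d hd).symm id))
    (hg₄ : ∀ n, n₀ ≤ n → g₄ n = 0)
    (x₀ x₁ : Fin d → ℝ)
    (hcons₁ : B₂ n₀ *ᵥ x₁ + C₂ n₀ *ᵥ x₀ = g₂ n₀)
    (hcons₂ : C₃ n₀ *ᵥ x₀ = g₃ n₀)
    (hcons₃ : C₃ (n₀ + 1) *ᵥ x₁ = g₃ (n₀ + 1)) :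
    ∃ x : ℕ → Fin d → ℝ,
      (x n₀ = x₀ ∧ x (n₀ + 1) = x₁ ∧
        ∀ n, n₀ ≤ n →
          A₁ n *ᵥ x (n + 2) + B₁ n *ᵥ x (n + 1) + C₁ n *ᵥ x n = g₁ n ∧
          B₂ n *ᵥ x (n + 1) + C₂ n *ᵥ x n = g₂ n ∧
          C₃ n *ᵥ x n = g₃ n) ∧
      ∀ y : ℕ → Fin d → ℝ,
        (y n₀ = x₀ ∧ y (n₀ + 1) = x₁ ∧
          ∀ n, n₀ ≤ n →
            A₁ n *ᵥ y (n + 2) + B₁ n *ᵥ y (n + 1) + C₁ n *ᵥ y n = g₁ n ∧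
            B₂ n *ᵥ y (n + 1) + C₂ n *ᵥ y n = g₂ n ∧
            C₃ n *ᵥ y n = g₃ n) →
        ∀ n, n₀ ≤ n → y n = x n := by
  classical
  set e := blockEquiv r₂ r₁ r₀ d hd with he
  set M : ℕ → Matrix (Fin d) (Fin d) ℝ := fun n =>
    (Matrix.fromRows (A₁ n) (Matrix.fromRows (B₂ (n + 1)) (C₃ (n + 2)))).submatrix
      e.symm id with hM
  -- RHS of the linear system determining x (n+2) from p = x n, q = x (n+1)
  set rhs : ℕ → (Fin d → ℝ) → (Fin d → ℝ) → (Fin d → ℝ) := fun n p q i =>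
    Sum.elim (g₁ n - B₁ n *ᵥ q - C₁ n *ᵥ p)
      (Sum.elim (g₂ (n + 1) - C₂ (n + 1) *ᵥ q) (g₃ (n + 2))) (e.symm i) with hrhs
  -- the action of M n on a vector
  have hMv : ∀ n (u : Fin d → ℝ), M n *ᵥ u =
      fun i => Sum.elim (A₁ n *ᵥ u)
        (Sum.elim (B₂ (n + 1) *ᵥ u) (C₃ (n + 2) *ᵥ u)) (e.symm i) := by
    intro n u
    funext i
    have h1 : (M n *ᵥ u) i =
        ((Matrix.fromRows (A₁ n) (Matrix.fromRows (B₂ (n + 1)) (C₃ (n + 2)))) *ᵥ u)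
          (e.symm i) := by
      simp [hM, Matrix.mulVec, dotProduct, Matrix.submatrix_apply]
    rw [h1]
    simp only [Matrix.fromRows_mulVec]
  -- characterization of the recursion equation
  have key : ∀ n (u p q : Fin d → ℝ),
      M n *ᵥ u = rhs n p q ↔
      (A₁ n *ᵥ u + B₁ n *ᵥ q + C₁ n *ᵥ p = g₁ n ∧
       B₂ (n + 1) *ᵥ u + C₂ (n + 1) *ᵥ q = g₂ (n + 1) ∧
       C₃ (n + 2) *ᵥ u = g₃ (n + 2)) := by
    intro n u p q
    rw [hMv]
    constructor
    · intro h
      have h' : ∀ s : Fin r₂ ⊕ (Fin r₁ ⊕ Fin r₀),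
          Sum.elim (A₁ n *ᵥ u) (Sum.elim (B₂ (n + 1) *ᵥ u) (C₃ (n + 2) *ᵥ u)) s =
          Sum.elim (g₁ n - B₁ n *ᵥ q - C₁ n *ᵥ p)
            (Sum.elim (g₂ (n + 1) - C₂ (n + 1) *ᵥ q) (g₃ (n + 2))) s := by
        intro s
        have := congrFun h (e s)
        simpa [hrhs] using this
      refine ⟨?_, ?_, ?_⟩
      · funext i
        have := h' (Sum.inl i)
        simp only [Sum.elim_inl] at this
        simp only [Pi.add_apply, this, Pi.sub_apply]
        ring
      · funext i
        have := h' (Sum.inr (Sum.inl i))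
        simp only [Sum.elim_inr, Sum.elim_inl] at this
        simp only [Pi.add_apply, this, Pi.sub_apply]
        ring
      · funext i
        have := h' (Sum.inr (Sum.inr i))
        simpa using this
    · rintro ⟨h1, h2, h3⟩
      funext i
      simp only [hrhs]
      generalize e.symm i = t
      rcases t with t | t | t
      · simp only [Sum.elim_inl, Pi.sub_apply]
        have := congrFun h1 t
        simp only [Pi.add_apply] at this
        linarith
      · simp only [Sum.elim_inr, Sum.elim_inl, Pi.sub_apply]
        have := congrFun h2 t
        simp only [Pi.add_apply] at this
        linarith
      · simp only [Sum.elim_inr]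
        exact congrFun h3 t
  -- the step map
  set step : ℕ → (Fin d → ℝ) → (Fin d → ℝ) → (Fin d → ℝ) := fun n p q =>
    (M n)⁻¹ *ᵥ rhs n p q with hstepdef
  have hstepM : ∀ n, n₀ ≤ n → ∀ p q, M n *ᵥ step n p q = rhs n p q := by
    intro n hn p q
    have hdet : IsUnit (M n).det := (Matrix.isUnit_iff_isUnit_det _).mp (hinv n hn)
    rw [hstepdef]
    simp only
    rw [Matrix.mulVec_mulVec, Matrix.mul_nonsing_inv _ hdet, Matrix.one_mulVec]
  -- uniqueness of solutions of the linear system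
  have huniq : ∀ n, n₀ ≤ n → ∀ u u' : Fin d → ℝ,
      M n *ᵥ u = M n *ᵥ u' → u = u' := by
    intro n hn u u' h
    have hdet : IsUnit (M n).det := (Matrix.isUnit_iff_isUnit_det _).mp (hinv n hn)
    have := congrArg (fun w => (M n)⁻¹ *ᵥ w) h
    simpa [Matrix.mulVec_mulVec, Matrix.nonsing_inv_mul _ hdet,
      Matrix.one_mulVec] using this
  -- build the sequence
  set s : ℕ → (Fin d → ℝ) × (Fin d → ℝ) := fun k =>
    Nat.rec (x₀, x₁) (fun k p => (p.2, step (n₀ + k) p.1 p.2)) k with hs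
  set x : ℕ → Fin d → ℝ := fun n => if n < n₀ then 0 else (s (n - n₀)).1 with hx
  have hxk : ∀ k, x (n₀ + k) = (s k).1 := by
    intro k
    simp [hx, Nat.not_lt.mpr (Nat.le_add_right n₀ k)]
  have hx0 : x n₀ = x₀ := by simpa [hs] using hxk 0
  have hx1 : x (n₀ + 1) = x₁ := by simpa [hs] using hxk 1
  have hxsnd : ∀ k, x (n₀ + k + 1) = (s k).2 := by
    intro k
    have := hxk (k + 1)
    simpa [hs, ← Nat.add_assoc] using this
  have hxstep : ∀ k, x (n₀ + k + 2) = step (n₀ + k) (x (n₀ + k)) (x (n₀ + k + 1)) := by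
    intro k
    have h2 := hxsnd (k + 1)
    rw [hxk, hxsnd]
    have : n₀ + k + 2 = n₀ + (k + 1) + 1 := by omega
    rw [this, h2]
  -- the three equations produced by step k
  have main : ∀ k,
      (A₁ (n₀ + k) *ᵥ x (n₀ + k + 2) + B₁ (n₀ + k) *ᵥ x (n₀ + k + 1) +
        C₁ (n₀ + k) *ᵥ x (n₀ + k) = g₁ (n₀ + k)) ∧
      (B₂ (n₀ + k + 1) *ᵥ x (n₀ + k + 2) + C₂ (n₀ + k + 1) *ᵥ x (n₀ + k + 1) =
        g₂ (n₀ + k + 1)) ∧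
      (C₃ (n₀ + k + 2) *ᵥ x (n₀ + k + 2) = g₃ (n₀ + k + 2)) := by
    intro k
    have h := hstepM (n₀ + k) (Nat.le_add_right _ _) (x (n₀ + k)) (x (n₀ + k + 1))
    rw [← hxstep k] at h
    exact (key (n₀ + k) _ _ _).mp h
  -- x solves the system at every n ≥ n₀
  have hsol : ∀ n, n₀ ≤ n →
      A₁ n *ᵥ x (n + 2) + B₁ n *ᵥ x (n + 1) + C₁ n *ᵥ x n = g₁ n ∧
      B₂ n *ᵥ x (n + 1) + C₂ n *ᵥ x n = g₂ n ∧
      C₃ n *ᵥ x n = g₃ n := by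
    intro n hn
    obtain ⟨k, rfl⟩ := Nat.exists_eq_add_of_le hn
    refine ⟨(main k).1, ?_, ?_⟩
    · rcases k with _ | k
      · simpa [hx0, hx1] using hcons₁
      · have := (main k).2.1
        simpa [← Nat.add_assoc] using this
    · rcases k with _ | _ | k
      · simpa [hx0] using hcons₂
      · simpa [hx1] using hcons₃
      · have := (main k).2.2
        simpa [show n₀ + k + 2 = n₀ + (k + 2) by omega] using this
  refine ⟨x, ⟨hx0, hx1, hsol⟩, ?_⟩
  rintro y ⟨hy0, hy1, hy⟩ n hn
  -- two-step induction for uniqueness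
  have key2 : ∀ k, y (n₀ + k) = x (n₀ + k) ∧ y (n₀ + k + 1) = x (n₀ + k + 1) := by
    intro k
    induction k with
    | zero =>
      exact ⟨by rw [show n₀ + 0 = n₀ from rfl, hy0, hx0],
             by rw [show n₀ + 0 + 1 = n₀ + 1 from rfl, hy1, hx1]⟩
    | succ k ih =>
      refine ⟨ih.2, ?_⟩
      have hny := hy (n₀ + k) (Nat.le_add_right _ _)
      have heq3y : C₃ (n₀ + k + 2) *ᵥ y (n₀ + k + 2) = g₃ (n₀ + k + 2) := by
        have := (hy (n₀ + k + 2) (by omega)).2.2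
        exact this
      have heq2y : B₂ (n₀ + k + 1) *ᵥ y (n₀ + k + 2) + C₂ (n₀ + k + 1) *ᵥ y (n₀ + k + 1) =
          g₂ (n₀ + k + 1) := by
        have := (hy (n₀ + k + 1) (by omega)).2.1
        simpa [← Nat.add_assoc] using this
      have hMy : M (n₀ + k) *ᵥ y (n₀ + k + 2) =
          rhs (n₀ + k) (x (n₀ + k)) (x (n₀ + k + 1)) := by
        rw [key]
        rw [← ih.1, ← ih.2]
        exact ⟨hny.1, heq2y, heq3y⟩
      have hMx : M (n₀ + k) *ᵥ x (n₀ + k + 2) =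
          rhs (n₀ + k) (x (n₀ + k)) (x (n₀ + k + 1)) := by
        rw [hxstep k]
        exact hstepM (n₀ + k) (Nat.le_add_right _ _) _ _
      have := huniq (n₀ + k) (Nat.le_add_right _ _) _ _ (hMy.trans hMx.symm)
      have h2 : n₀ + (k + 1) + 1 = n₀ + k + 2 := by omega
      rw [h2]
      exact this
  obtain ⟨k, rfl⟩ := Nat.exists_eq_add_of_le hn
  exact (key2 k).1
end

section
/- Let Ǎ, B̌, Č ∈ ℝ^{m×d} and Ď ∈ ℝ^{m×p}. Then there exists an orthogonal matrix Ǔ ∈ ℝ^{m×m} such that Ǔ[Ǎ, B̌, Č | Ď] has the block structure with six block rows: [Ǎ₁, B̌₁, Č₁ | Ď₁; 0, B̌₂, Č₂ | 0; 0, 0, Č₃ | 0; 0, 0, 0 | 0; 0, B̌₄, Č₄ | Ď₄; 0, 0, Č₅ | Ď₅], where Ǎ₁, B̌₂, B̌₄, Č₃, and the stacked matrix [Ď₄; Ď₅] all have full row rank. -/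
open Matrix

open Submodule Module
noncomputable section
set_option maxHeartbeats 2000000
private def rowMap {m k : ℕ} (M : Matrix (Fin m) (Fin k) ℝ) :
    EuclideanSpace ℝ (Fin m) →ₗ[ℝ] (Fin k → ℝ) :=
  M.vecMulLinear ∘ₗ (WithLp.linearEquiv 2 ℝ (Fin m → ℝ)).toLinearMap

private lemma rowMap_apply {m k : ℕ} (M : Matrix (Fin m) (Fin k) ℝ)
    (u : EuclideanSpace ℝ (Fin m)) (j : Fin k) : rowMap M u j = ∑ i, u i * M i j := by
  simp [rowMap, Matrix.vecMul, dotProduct]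

private def kerM {m k : ℕ} (M : Matrix (Fin m) (Fin k) ℝ) :
    Submodule ℝ (EuclideanSpace ℝ (Fin m)) := LinearMap.ker (rowMap M)

private lemma rank_of_rows {m k : ℕ} {ι : Type} [Fintype ι] (M : Matrix (Fin m) (Fin k) ℝ)
    (v : ι → EuclideanSpace ℝ (Fin m)) (hv : LinearIndependent ℝ v)
    (hd : Disjoint (span ℝ (Set.range v)) (kerM M)) :
    (Matrix.of fun s j => ∑ i, v s i * M i j).rank = Fintype.card ι := by
  have hR : (Matrix.of fun s j => ∑ i, v s i * M i j) = Matrix.of fun s => rowMap M (v s) := by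
    ext s j; simp [rowMap_apply]
  rw [hR, ← Matrix.rank_transpose, Matrix.rank_eq_finrank_span_cols]
  change finrank ℝ (span ℝ (Set.range (Matrix.of fun s => rowMap M (v s)))) = Fintype.card ι
  have h1 : Set.range (Matrix.of fun s => rowMap M (v s)) = (rowMap M) '' Set.range v := by
    rw [← Set.range_comp]; rfl
  rw [h1, ← Submodule.map_span]
  set W := span ℝ (Set.range v) with hW
  have hker : LinearMap.ker ((rowMap M).domRestrict W) = ⊥ := by
    rw [LinearMap.ker_eq_bot']
    rintro ⟨x, hx⟩ h
    have hx0 : x ∈ kerM M := h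
    have : x = 0 := (Submodule.disjoint_def.mp hd) x hx hx0
    exact Subtype.ext this
  have h2 := LinearMap.finrank_range_add_finrank_ker ((rowMap M).domRestrict W)
  rw [LinearMap.range_domRestrict, hker, finrank_bot, add_zero] at h2
  rw [h2, hW, finrank_span_eq_card hv]

private lemma finrank_inf_orth {E' : Type*} [NormedAddCommGroup E'] [InnerProductSpace ℝ E']
    [FiniteDimensional ℝ E'] {T S : Submodule ℝ E'} (h : T ≤ S) :
    finrank ℝ (S ⊓ Tᗮ : Submodule ℝ E') + finrank ℝ T = finrank ℝ S := by
  have h1 : T ⊔ Tᗮ ⊓ S = S := Submodule.sup_orthogonal_inf_of_hasOrthogonalProjection h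
  have hsup : (S ⊓ Tᗮ) ⊔ T = S := by rw [sup_comm, inf_comm]; exact h1
  have hinf : (S ⊓ Tᗮ) ⊓ T = ⊥ := by
    rw [eq_bot_iff]; rintro x ⟨⟨_, hx2⟩, hx3⟩
    exact (Submodule.mem_bot ℝ).mpr (Submodule.disjoint_def.mp (Submodule.orthogonal_disjoint T) x hx3 hx2)
  have := Submodule.finrank_sup_add_finrank_inf_eq (S ⊓ Tᗮ) T
  rw [hsup, hinf, finrank_bot, add_zero] at this
  exact this.symm

private lemma orthonormal_sum_elim {E' : Type*} [NormedAddCommGroup E'] [InnerProductSpace ℝ E']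
    {ι κ : Type*} {v : ι → E'} {w : κ → E'} (hv : Orthonormal ℝ v) (hw : Orthonormal ℝ w)
    (h : ∀ i j, inner ℝ (v i) (w j) = (0 : ℝ)) : Orthonormal ℝ (Sum.elim v w) := by
  classical
  rw [orthonormal_iff_ite] at hv hw ⊢
  rintro (i|i) (j|j)
  · simpa using hv i j
  · simpa using h i j
  · simp only [Sum.elim_inr, Sum.elim_inl, reduceCtorEq, if_false]
    rw [real_inner_comm]; exact h j i
  · simpa using hw i j

private lemma orthonormal_coe {E' : Type*} [NormedAddCommGroup E'] [InnerProductSpace ℝ E']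
    {W : Submodule ℝ E'} {ι : Type*} {b : ι → W} (hb : Orthonormal ℝ b) :
    Orthonormal ℝ (fun s => (b s : E')) := by
  classical
  rw [orthonormal_iff_ite] at hb ⊢
  intro i j
  rw [← Submodule.coe_inner]
  exact hb i j


/-- Condensed form for a second order descriptor system: there is an orthogonal
matrix `U` bringing `[A, B, C | D]` to the six-block-row condensed form, where
`A₁`, `B₂`, `B₄`, `C₃` and `[D₄; D₅]` have full row rank. -/
theorem descriptor_condensed_form
    (m d p : ℕ) (A B C : Matrix (Fin m) (Fin d) ℝ) (D : Matrix (Fin m) (Fin p) ℝ) :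
    ∃ (n₁ n₂ n₃ n₄ n₅ n₆ : ℕ) (_ : n₁ + n₂ + n₃ + n₄ + n₅ + n₆ = m)
      (U : Matrix (Fin m) (Fin m) ℝ)
      (e : (Fin n₁ ⊕ (Fin n₂ ⊕ (Fin n₃ ⊕ (Fin n₄ ⊕ (Fin n₅ ⊕ Fin n₆))))) ≃ Fin m)
      (A₁ B₁ C₁ : Matrix (Fin n₁) (Fin d) ℝ) (D₁ : Matrix (Fin n₁) (Fin p) ℝ)
      (B₂ C₂ : Matrix (Fin n₂) (Fin d) ℝ)
      (C₃ : Matrix (Fin n₃) (Fin d) ℝ)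
      (B₄ C₄ : Matrix (Fin n₅) (Fin d) ℝ) (D₄ : Matrix (Fin n₅) (Fin p) ℝ)
      (C₅ : Matrix (Fin n₆) (Fin d) ℝ) (D₅ : Matrix (Fin n₆) (Fin p) ℝ),
      Uᵀ * U = 1 ∧
      (U * A).submatrix e id = Matrix.fromRows A₁
        (Matrix.fromRows 0 (Matrix.fromRows 0 (Matrix.fromRows 0 (Matrix.fromRows 0 0)))) ∧
      (U * B).submatrix e id = Matrix.fromRows B₁
        (Matrix.fromRows B₂ (Matrix.fromRows 0 (Matrix.fromRows 0 (Matrix.fromRows B₄ 0)))) ∧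
      (U * C).submatrix e id = Matrix.fromRows C₁
        (Matrix.fromRows C₂ (Matrix.fromRows C₃ (Matrix.fromRows 0 (Matrix.fromRows C₄ C₅)))) ∧
      (U * D).submatrix e id = Matrix.fromRows D₁
        (Matrix.fromRows 0 (Matrix.fromRows 0 (Matrix.fromRows 0 (Matrix.fromRows D₄ D₅)))) ∧
      A₁.rank = n₁ ∧ B₂.rank = n₂ ∧ C₃.rank = n₃ ∧ B₄.rank = n₅ ∧
      (Matrix.fromRows D₄ D₅).rank = n₅ + n₆ := by
  classical
  set kA := kerM A with hkA
  set kB := kerM B with hkB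
  set kC := kerM C with hkC
  set kD := kerM D with hkD
  set P := kA ⊓ kD with hP
  set T2 := P ⊓ kB with hT2
  set T3 := T2 ⊓ kC with hT3
  set Q := kA ⊓ Pᗮ with hQ
  set T6 := Q ⊓ kB with hT6
  set W1 := kAᗮ with hW1
  set W2 := P ⊓ T2ᗮ with hW2
  set W3 := T2 ⊓ T3ᗮ with hW3
  set W5 := Q ⊓ T6ᗮ with hW5
  -- dimension bookkeeping
  have hd1 : finrank ℝ kA + finrank ℝ W1 = m := by
    have := Submodule.finrank_add_finrank_orthogonal kA
    simpa using this
  have hdQ : finrank ℝ Q + finrank ℝ P = finrank ℝ kA := finrank_inf_orth inf_le_left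
  have hd2 : finrank ℝ W2 + finrank ℝ T2 = finrank ℝ P := finrank_inf_orth inf_le_left
  have hd3 : finrank ℝ W3 + finrank ℝ T3 = finrank ℝ T2 := finrank_inf_orth inf_le_left
  have hd5 : finrank ℝ W5 + finrank ℝ T6 = finrank ℝ Q := finrank_inf_orth inf_le_left
  -- orthonormal bases
  let b1 := stdOrthonormalBasis ℝ W1
  let b2 := stdOrthonormalBasis ℝ W2
  let b3 := stdOrthonormalBasis ℝ W3
  let b4 := stdOrthonormalBasis ℝ T3
  let b5 := stdOrthonormalBasis ℝ W5
  let b6 := stdOrthonormalBasis ℝ T6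
  set n₁ := finrank ℝ W1
  set n₂ := finrank ℝ W2
  set n₃ := finrank ℝ W3
  set n₄ := finrank ℝ T3
  set n₅ := finrank ℝ W5
  set n₆ := finrank ℝ T6
  let v1 : Fin n₁ → EuclideanSpace ℝ (Fin m) := fun s => (b1 s : EuclideanSpace ℝ (Fin m))
  let v2 : Fin n₂ → EuclideanSpace ℝ (Fin m) := fun s => (b2 s : EuclideanSpace ℝ (Fin m))
  let v3 : Fin n₃ → EuclideanSpace ℝ (Fin m) := fun s => (b3 s : EuclideanSpace ℝ (Fin m))
  let v4 : Fin n₄ → EuclideanSpace ℝ (Fin m) := fun s => (b4 s : EuclideanSpace ℝ (Fin m))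
  let v5 : Fin n₅ → EuclideanSpace ℝ (Fin m) := fun s => (b5 s : EuclideanSpace ℝ (Fin m))
  let v6 : Fin n₆ → EuclideanSpace ℝ (Fin m) := fun s => (b6 s : EuclideanSpace ℝ (Fin m))
  -- memberships
  have hm1 : ∀ s, v1 s ∈ W1 := fun s => (b1 s).2
  have hm2 : ∀ s, v2 s ∈ W2 := fun s => (b2 s).2
  have hm3 : ∀ s, v3 s ∈ W3 := fun s => (b3 s).2
  have hm4 : ∀ s, v4 s ∈ T3 := fun s => (b4 s).2
  have hm5 : ∀ s, v5 s ∈ W5 := fun s => (b5 s).2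
  have hm6 : ∀ s, v6 s ∈ T6 := fun s => (b6 s).2
  -- inclusion facts
  have hW2P : W2 ≤ P := inf_le_left
  have hW3T2 : W3 ≤ T2 := inf_le_left
  have hT3T2 : T3 ≤ T2 := inf_le_left
  have hT2P : T2 ≤ P := inf_le_left
  have hPkA : P ≤ kA := inf_le_left
  have hPkD : P ≤ kD := inf_le_right
  have hT2kB : T2 ≤ kB := inf_le_right
  have hT3kC : T3 ≤ kC := inf_le_right
  have hW5Q : W5 ≤ Q := inf_le_left
  have hT6Q : T6 ≤ Q := inf_le_left
  have hT6kB : T6 ≤ kB := inf_le_right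
  have hQkA : Q ≤ kA := inf_le_left
  have hQPo : Q ≤ Pᗮ := inf_le_right
  -- memberships in kA for lower blocks
  have hm2A : ∀ s, v2 s ∈ kA := fun s => hPkA (hW2P (hm2 s))
  have hm3A : ∀ s, v3 s ∈ kA := fun s => hPkA (hT2P (hW3T2 (hm3 s)))
  have hm4A : ∀ s, v4 s ∈ kA := fun s => hPkA (hT2P (hT3T2 (hm4 s)))
  have hm5A : ∀ s, v5 s ∈ kA := fun s => hQkA (hW5Q (hm5 s))
  have hm6A : ∀ s, v6 s ∈ kA := fun s => hQkA (hT6Q (hm6 s))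
  have hm2P : ∀ s, v2 s ∈ P := fun s => hW2P (hm2 s)
  have hm3P : ∀ s, v3 s ∈ P := fun s => hT2P (hW3T2 (hm3 s))
  have hm4P : ∀ s, v4 s ∈ P := fun s => hT2P (hT3T2 (hm4 s))
  have hm5Po : ∀ s, v5 s ∈ Pᗮ := fun s => hQPo (hW5Q (hm5 s))
  have hm6Po : ∀ s, v6 s ∈ Pᗮ := fun s => hQPo (hT6Q (hm6 s))
  -- inner product vanishing helpers
  have horth : ∀ (S : Submodule ℝ (EuclideanSpace ℝ (Fin m))) (x y : EuclideanSpace ℝ (Fin m)),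
      x ∈ Sᗮ → y ∈ S → inner ℝ x y = (0 : ℝ) := by
    intro S x y hx hy
    rw [real_inner_comm]
    exact Submodule.inner_right_of_mem_orthogonal hy hx
  have horth' : ∀ (S : Submodule ℝ (EuclideanSpace ℝ (Fin m))) (x y : EuclideanSpace ℝ (Fin m)),
      x ∈ S → y ∈ Sᗮ → inner ℝ x y = (0 : ℝ) := by
    intro S x y hx hy
    exact Submodule.inner_right_of_mem_orthogonal hx hy
  -- orthonormal family
  let v : (Fin n₁ ⊕ (Fin n₂ ⊕ (Fin n₃ ⊕ (Fin n₄ ⊕ (Fin n₅ ⊕ Fin n₆))))) →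
      EuclideanSpace ℝ (Fin m) :=
    Sum.elim v1 (Sum.elim v2 (Sum.elim v3 (Sum.elim v4 (Sum.elim v5 v6))))
  have hon1 : Orthonormal ℝ v1 := orthonormal_coe b1.orthonormal
  have hon2 : Orthonormal ℝ v2 := orthonormal_coe b2.orthonormal
  have hon3 : Orthonormal ℝ v3 := orthonormal_coe b3.orthonormal
  have hon4 : Orthonormal ℝ v4 := orthonormal_coe b4.orthonormal
  have hon5 : Orthonormal ℝ v5 := orthonormal_coe b5.orthonormal
  have hon6 : Orthonormal ℝ v6 := orthonormal_coe b6.orthonormal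
  have hon56 : Orthonormal ℝ (Sum.elim v5 v6) := by
    refine orthonormal_sum_elim hon5 hon6 ?_
    intro i j
    exact horth T6 _ _ (hm5 i).2 (hm6 j)
  have hon456 : Orthonormal ℝ (Sum.elim v4 (Sum.elim v5 v6)) := by
    refine orthonormal_sum_elim hon4 hon56 ?_
    rintro i (j|j)
    · exact horth' P _ _ (hm4P i) (hm5Po j)
    · exact horth' P _ _ (hm4P i) (hm6Po j)
  have hon3456 : Orthonormal ℝ (Sum.elim v3 (Sum.elim v4 (Sum.elim v5 v6))) := by
    refine orthonormal_sum_elim hon3 hon456 ?_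
    rintro i (j|j|j)
    · exact horth T3 _ _ (hm3 i).2 (hm4 j)
    · exact horth' P _ _ (hm3P i) (hm5Po j)
    · exact horth' P _ _ (hm3P i) (hm6Po j)
  have hon23456 : Orthonormal ℝ
      (Sum.elim v2 (Sum.elim v3 (Sum.elim v4 (Sum.elim v5 v6)))) := by
    refine orthonormal_sum_elim hon2 hon3456 ?_
    rintro i (j|j|j|j)
    · exact horth T2 _ _ (hm2 i).2 (hW3T2 (hm3 j))
    · exact horth T2 _ _ (hm2 i).2 (hT3T2 (hm4 j))
    · exact horth' P _ _ (hm2P i) (hm5Po j)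
    · exact horth' P _ _ (hm2P i) (hm6Po j)
  have hon : Orthonormal ℝ v := by
    refine orthonormal_sum_elim hon1 hon23456 ?_
    rintro i (j|j|j|j|j)
    · exact horth kA _ _ (hm1 i) (hm2A j)
    · exact horth kA _ _ (hm1 i) (hm3A j)
    · exact horth kA _ _ (hm1 i) (hm4A j)
    · exact horth kA _ _ (hm1 i) (hm5A j)
    · exact horth kA _ _ (hm1 i) (hm6A j)
  -- the index equivalence
  have hsum : n₁ + n₂ + n₃ + n₄ + n₅ + n₆ = m := by omega
  have hcard : Fintype.card (Fin n₁ ⊕ (Fin n₂ ⊕ (Fin n₃ ⊕ (Fin n₄ ⊕ (Fin n₅ ⊕ Fin n₆))))) =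
      Fintype.card (Fin m) := by simp; omega
  let e := Fintype.equivOfCardEq hcard
  -- the orthogonal matrix
  let U : Matrix (Fin m) (Fin m) ℝ := Matrix.of fun i j => v (e.symm i) j
  have hUUt : U * Uᵀ = 1 := by
    ext i i'
    have h := orthonormal_iff_ite.mp hon (e.symm i) (e.symm i')
    rw [PiLp.inner_apply] at h
    simp only [RCLike.inner_apply, conj_trivial] at h
    simp only [Matrix.mul_apply, Matrix.transpose_apply, Matrix.one_apply, U, Matrix.of_apply]
    simp only [mul_comm ((v (e.symm i')).ofLp _)] at h
    rw [h]
    congr 1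
    simp [Equiv.symm_apply_eq, eq_comm]
  have hUtU : Uᵀ * U = 1 := mul_eq_one_comm.mp hUUt
  -- entries of transformed matrices
  have hent : ∀ (k : ℕ) (M : Matrix (Fin m) (Fin k) ℝ) x (j : Fin k),
      ((U * M).submatrix e id) x j = ∑ i, v x i * M i j := by
    intro k M x j
    simp [Matrix.mul_apply, U, Matrix.submatrix_apply]
  have hzero : ∀ (k : ℕ) (M : Matrix (Fin m) (Fin k) ℝ) x,
      v x ∈ kerM M → ∀ j, ∑ i, v x i * M i j = 0 := by
    intro k M x hx j
    have h0 : rowMap M (v x) = 0 := hx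
    have := congrFun h0 j
    rwa [rowMap_apply] at this
  -- block definitions
  let A₁ : Matrix (Fin n₁) (Fin d) ℝ := Matrix.of fun s j => ∑ i, v1 s i * A i j
  let B₁ : Matrix (Fin n₁) (Fin d) ℝ := Matrix.of fun s j => ∑ i, v1 s i * B i j
  let C₁ : Matrix (Fin n₁) (Fin d) ℝ := Matrix.of fun s j => ∑ i, v1 s i * C i j
  let D₁ : Matrix (Fin n₁) (Fin p) ℝ := Matrix.of fun s j => ∑ i, v1 s i * D i j
  let B₂ : Matrix (Fin n₂) (Fin d) ℝ := Matrix.of fun s j => ∑ i, v2 s i * B i j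
  let C₂ : Matrix (Fin n₂) (Fin d) ℝ := Matrix.of fun s j => ∑ i, v2 s i * C i j
  let C₃ : Matrix (Fin n₃) (Fin d) ℝ := Matrix.of fun s j => ∑ i, v3 s i * C i j
  let B₄ : Matrix (Fin n₅) (Fin d) ℝ := Matrix.of fun s j => ∑ i, v5 s i * B i j
  let C₄ : Matrix (Fin n₅) (Fin d) ℝ := Matrix.of fun s j => ∑ i, v5 s i * C i j
  let D₄ : Matrix (Fin n₅) (Fin p) ℝ := Matrix.of fun s j => ∑ i, v5 s i * D i j
  let C₅ : Matrix (Fin n₆) (Fin d) ℝ := Matrix.of fun s j => ∑ i, v6 s i * C i j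
  let D₅ : Matrix (Fin n₆) (Fin p) ℝ := Matrix.of fun s j => ∑ i, v6 s i * D i j
  refine ⟨n₁, n₂, n₃, n₄, n₅, n₆, hsum, U, e, A₁, B₁, C₁, D₁, B₂, C₂, C₃, B₄, C₄, D₄, C₅, D₅,
    hUtU, ?_, ?_, ?_, ?_, ?_, ?_, ?_, ?_, ?_⟩
  · ext x j
    rcases x with s|s|s|s|s|s <;>
      simp only [Matrix.fromRows, Matrix.of_apply, Sum.elim_inl, Sum.elim_inr,
        Matrix.zero_apply] <;> rw [hent]
    · rfl
    · exact hzero _ A (Sum.inr (Sum.inl s)) (hm2A s) j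
    · exact hzero _ A (Sum.inr (Sum.inr (Sum.inl s))) (hm3A s) j
    · exact hzero _ A (Sum.inr (Sum.inr (Sum.inr (Sum.inl s)))) (hm4A s) j
    · exact hzero _ A (Sum.inr (Sum.inr (Sum.inr (Sum.inr (Sum.inl s))))) (hm5A s) j
    · exact hzero _ A (Sum.inr (Sum.inr (Sum.inr (Sum.inr (Sum.inr s))))) (hm6A s) j
  · ext x j
    rcases x with s|s|s|s|s|s <;>
      simp only [Matrix.fromRows, Matrix.of_apply, Sum.elim_inl, Sum.elim_inr,
        Matrix.zero_apply] <;> rw [hent]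
    · rfl
    · rfl
    · exact hzero _ B (Sum.inr (Sum.inr (Sum.inl s))) (hT2kB (hW3T2 (hm3 s))) j
    · exact hzero _ B (Sum.inr (Sum.inr (Sum.inr (Sum.inl s)))) (hT2kB (hT3T2 (hm4 s))) j
    · rfl
    · exact hzero _ B (Sum.inr (Sum.inr (Sum.inr (Sum.inr (Sum.inr s))))) (hT6kB (hm6 s)) j
  · ext x j
    rcases x with s|s|s|s|s|s <;>
      simp only [Matrix.fromRows, Matrix.of_apply, Sum.elim_inl, Sum.elim_inr,
        Matrix.zero_apply] <;> rw [hent]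
    · rfl
    · rfl
    · rfl
    · exact hzero _ C (Sum.inr (Sum.inr (Sum.inr (Sum.inl s)))) (hT3kC (hm4 s)) j
    · rfl
    · rfl
  · ext x j
    rcases x with s|s|s|s|s|s <;>
      simp only [Matrix.fromRows, Matrix.of_apply, Sum.elim_inl, Sum.elim_inr,
        Matrix.zero_apply] <;> rw [hent]
    · rfl
    · exact hzero _ D (Sum.inr (Sum.inl s)) (hPkD (hm2P s)) j
    · exact hzero _ D (Sum.inr (Sum.inr (Sum.inl s))) (hPkD (hm3P s)) j
    · exact hzero _ D (Sum.inr (Sum.inr (Sum.inr (Sum.inl s)))) (hPkD (hm4P s)) j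
    · rfl
    · rfl
  -- rank conditions
  · have h := rank_of_rows A v1 hon1.linearIndependent ?_
    · simpa using h
    · refine Disjoint.mono_left ?_ (Submodule.orthogonal_disjoint kA).symm
      exact span_le.mpr (by rintro _ ⟨s, rfl⟩; exact hm1 s)
  · have h := rank_of_rows B v2 hon2.linearIndependent ?_
    · simpa using h
    · rw [Submodule.disjoint_def]
      intro x hx hxB
      have hx' : x ∈ W2 := span_le.mpr (by rintro _ ⟨s, rfl⟩; exact hm2 s) hx
      rw [hW2, Submodule.mem_inf] at hx'
      exact Submodule.disjoint_def.mp (Submodule.orthogonal_disjoint T2) x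
        (Submodule.mem_inf.mpr ⟨hx'.1, hxB⟩) hx'.2
  · have h := rank_of_rows C v3 hon3.linearIndependent ?_
    · simpa using h
    · rw [Submodule.disjoint_def]
      intro x hx hxC
      have hx' : x ∈ W3 := span_le.mpr (by rintro _ ⟨s, rfl⟩; exact hm3 s) hx
      rw [hW3, Submodule.mem_inf] at hx'
      exact Submodule.disjoint_def.mp (Submodule.orthogonal_disjoint T3) x
        (Submodule.mem_inf.mpr ⟨hx'.1, hxC⟩) hx'.2
  · have h := rank_of_rows B v5 hon5.linearIndependent ?_
    · simpa using h
    · rw [Submodule.disjoint_def]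
      intro x hx hxB
      have hx' : x ∈ W5 := span_le.mpr (by rintro _ ⟨s, rfl⟩; exact hm5 s) hx
      rw [hW5, Submodule.mem_inf] at hx'
      exact Submodule.disjoint_def.mp (Submodule.orthogonal_disjoint T6) x
        (Submodule.mem_inf.mpr ⟨hx'.1, hxB⟩) hx'.2
  · have hfr : Matrix.fromRows D₄ D₅ =
        Matrix.of fun s j => ∑ i, (Sum.elim v5 v6) s i * D i j := by
      ext x j; rcases x with s|s <;> rfl
    rw [hfr]
    have h := rank_of_rows D (Sum.elim v5 v6) hon56.linearIndependent ?_
    · simpa using h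
    · rw [Submodule.disjoint_def]
      intro x hx hxD
      have hx' : x ∈ Q := span_le.mpr ?_ hx
      · rw [hQ, Submodule.mem_inf] at hx'
        exact Submodule.disjoint_def.mp (Submodule.orthogonal_disjoint P) x
          (Submodule.mem_inf.mpr ⟨hx'.1, hxD⟩) hx'.2
      · rintro _ ⟨(s|s), rfl⟩
        · exact hW5Q (hm5 s)
        · exact hT6Q (hm6 s)
end
end

section
/- Let Q ∈ ℝ^{q×d} have full row rank with SVD U_Q Q V_Q = [Σ_Q, 0] (Σ_Q ∈ ℝ^{q×q} nonsingular diagonal, V_Q ∈ ℝ^{d×d} orthogonal), and let P ∈ ℝ^{p×d} have full row rank with SVD U_P P V_P = [Σ_P, 0], p + q ≤ d. Define F := V_Q [0, I_q; I_{d−q}, 0] V_Pᵀ ∈ ℝ^{d×d}. Then Q F V_P = U_Q^{-1}[0_{q×p}, 0_{q×(d−p−q)}, Σ_Q] and hence rank([P; QF]) = p + q. -/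
open Matrix

lemma finSumFinEquiv_symm_eq' {m n : ℕ} (x : Fin (m+n)) :
    finSumFinEquiv.symm x = if h : (x:ℕ) < m then Sum.inl ⟨x, h⟩
      else Sum.inr ⟨(x:ℕ) - m, by omega⟩ := by
  rw [Equiv.symm_apply_eq]
  split_ifs with h
  · simp [Fin.ext_iff]
  · simp [Fin.ext_iff]; omega

lemma reindex_lemma (p q d : ℕ) (hpq : p+q ≤ d) (SQ : Matrix (Fin q) (Fin q) ℝ)
    (h1 : (d-q)+q = d) (h2 : p + (d-p-q+q) = d) :
    (fromCols (0 : Matrix (Fin q) (Fin (d-q)) ℝ) SQ).submatrix id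
      (finSumFinEquiv.trans (finCongr h1)).symm
    = (fromCols (0 : Matrix (Fin q) (Fin p) ℝ)
        (fromCols (0 : Matrix (Fin q) (Fin (d-p-q)) ℝ) SQ)).submatrix id
      (((Equiv.refl (Fin p)).sumCongr finSumFinEquiv).trans
        (finSumFinEquiv.trans (finCongr h2))).symm := by
  ext i j
  simp only [submatrix_apply, id_eq, Equiv.symm_trans_apply, finCongr_symm, finCongr_apply,
    Equiv.sumCongr_symm, Equiv.sumCongr_apply, Equiv.refl_symm]
  rw [finSumFinEquiv_symm_eq', finSumFinEquiv_symm_eq']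
  simp only [Fin.coe_cast]
  split_ifs with h1 h2 h3
  · simp
  · simp only [Sum.map_inr, id]
    rw [finSumFinEquiv_symm_eq', dif_pos (show ((⟨(j:ℕ)-p, by omega⟩ : Fin (d-p-q+q)):ℕ) < d-p-q
      by simp only [Fin.val_mk]; omega)]
    simp
  · exfalso; omega
  · simp only [Sum.map_inr, id]
    rw [finSumFinEquiv_symm_eq', dif_neg (show ¬ ((⟨(j:ℕ)-p, by omega⟩ : Fin (d-p-q+q)):ℕ) < d-p-q
      by simp only [Fin.val_mk]; omega)]
    simp only [fromCols_apply_inr]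
    congr 1
    exact Fin.ext (by simp only [Fin.val_mk]; omega)

/-- Explicit SVD construction: with SVDs `U_P P V_P = [Σ_P, 0]`,
`U_Q Q V_Q = [Σ_Q, 0]` and `F := V_Q [0, I_q; I_{d−q}, 0] V_Pᵀ`, one has
`Q F V_P = U_Q⁻¹ [0, 0, Σ_Q]` and `rank [P; QF] = p + q`. -/
theorem svd_construction_full_row_rank
    (p q d : ℕ) (hpq : p + q ≤ d)
    (P : Matrix (Fin p) (Fin d) ℝ) (Q : Matrix (Fin q) (Fin d) ℝ)
    (UP : Matrix (Fin p) (Fin p) ℝ) (UQ : Matrix (Fin q) (Fin q) ℝ)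
    (VP VQ : Matrix (Fin d) (Fin d) ℝ)
    (SP : Matrix (Fin p) (Fin p) ℝ) (SQ : Matrix (Fin q) (Fin q) ℝ)
    (hUP : UPᵀ * UP = 1) (hUQ : UQᵀ * UQ = 1)
    (hVP : VPᵀ * VP = 1) (hVQ : VQᵀ * VQ = 1)
    (hSPdiag : SP.IsDiag) (hSPu : IsUnit SP)
    (hSQdiag : SQ.IsDiag) (hSQu : IsUnit SQ)
    (hsvdP : UP * P * VP =
      (Matrix.fromCols SP (0 : Matrix (Fin p) (Fin (d - p)) ℝ)).submatrix id
        (finSumFinEquiv.trans (finCongr (show p + (d - p) = d by omega))).symm)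
    (hsvdQ : UQ * Q * VQ =
      (Matrix.fromCols SQ (0 : Matrix (Fin q) (Fin (d - q)) ℝ)).submatrix id
        (finSumFinEquiv.trans (finCongr (show q + (d - q) = d by omega))).symm)
    (F : Matrix (Fin d) (Fin d) ℝ)
    (hF : F = VQ *
      ((Matrix.fromBlocks (0 : Matrix (Fin q) (Fin (d - q)) ℝ)
          (1 : Matrix (Fin q) (Fin q) ℝ)
          (1 : Matrix (Fin (d - q)) (Fin (d - q)) ℝ)
          (0 : Matrix (Fin (d - q)) (Fin q) ℝ)).submatrix
        (finSumFinEquiv.trans (finCongr (show q + (d - q) = d by omega))).symm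
        (finSumFinEquiv.trans (finCongr (show (d - q) + q = d by omega))).symm) *
      VPᵀ) :
    Q * F * VP = UQ⁻¹ *
      ((Matrix.fromCols (0 : Matrix (Fin q) (Fin p) ℝ)
          (Matrix.fromCols (0 : Matrix (Fin q) (Fin (d - p - q)) ℝ) SQ)).submatrix id
        (((Equiv.refl (Fin p)).sumCongr finSumFinEquiv).trans
          (finSumFinEquiv.trans
            (finCongr (show p + (d - p - q + q) = d by omega)))).symm) ∧
    (Matrix.fromRows P (Q * F)).rank = p + q := by
  have hUQ' : UQ * UQᵀ = 1 := mul_eq_one_comm.mp hUQ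
  have hUP' : UP * UPᵀ = 1 := mul_eq_one_comm.mp hUP
  have hVQ' : VQ * VQᵀ = 1 := mul_eq_one_comm.mp hVQ
  have hVP' : VP * VPᵀ = 1 := mul_eq_one_comm.mp hVP
  have hUQinv : UQ⁻¹ = UQᵀ := Matrix.inv_eq_left_inv hUQ
  -- abbreviations
  set eP : (Fin p ⊕ Fin (d-p)) ≃ Fin d :=
    finSumFinEquiv.trans (finCongr (show p + (d - p) = d by omega)) with heP
  set eQ : (Fin q ⊕ Fin (d-q)) ≃ Fin d :=
    finSumFinEquiv.trans (finCongr (show q + (d - q) = d by omega)) with heQ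
  set eQ' : (Fin (d-q) ⊕ Fin q) ≃ Fin d :=
    finSumFinEquiv.trans (finCongr (show (d - q) + q = d by omega)) with heQ'
  set A : Matrix (Fin p) (Fin d) ℝ :=
    (fromCols SP (0 : Matrix (Fin p) (Fin (d - p)) ℝ)).submatrix id ⇑eP.symm with hA
  set B : Matrix (Fin q) (Fin d) ℝ :=
    (fromCols (0 : Matrix (Fin q) (Fin (d-q)) ℝ) SQ).submatrix id ⇑eQ'.symm with hB
  -- Step 1: Q * F * VP = UQᵀ * B
  have hQ : Q = UQᵀ * ((fromCols SQ (0 : Matrix (Fin q) (Fin (d - q)) ℝ)).submatrix id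
      ⇑eQ.symm) * VQᵀ := by
    rw [← hsvdQ]
    simp only [← Matrix.mul_assoc]
    rw [hUQ, Matrix.one_mul, Matrix.mul_assoc, hVQ', Matrix.mul_one]
  have hQFVP : Q * F * VP = UQᵀ * B := by
    rw [hQ, hF]
    have key : ∀ (X : Matrix (Fin q) (Fin d) ℝ) (Y : Matrix (Fin d) (Fin d) ℝ),
        (UQᵀ * X * VQᵀ) * (VQ * Y * VPᵀ) * VP = UQᵀ * (X * Y) := by
      intro X Y
      calc (UQᵀ * X * VQᵀ) * (VQ * Y * VPᵀ) * VP
          = UQᵀ * (X * ((VQᵀ * VQ) * (Y * (VPᵀ * VP)))) := by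
            simp only [Matrix.mul_assoc]
        _ = UQᵀ * (X * Y) := by rw [hVQ, hVP, Matrix.one_mul, Matrix.mul_one]
    rw [key, Matrix.submatrix_mul_equiv, fromCols_mul_fromBlocks]
    simp [hB]
  constructor
  · rw [hQFVP, hUQinv, hB, heQ', reindex_lemma p q d hpq SQ _ _]
  -- Step 2: rank
  · have hSP1 : SP * SP⁻¹ = 1 :=
      Matrix.mul_nonsing_inv SP ((Matrix.isUnit_iff_isUnit_det SP).mp hSPu)
    have hSQ1 : SQ * SQ⁻¹ = 1 :=
      Matrix.mul_nonsing_inv SQ ((Matrix.isUnit_iff_isUnit_det SQ).mp hSQu)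
    set N1 : Matrix (Fin d) (Fin p) ℝ :=
      (fromRows SP⁻¹ (0 : Matrix (Fin (d-p)) (Fin p) ℝ)).submatrix ⇑eP.symm id with hN1
    set N2 : Matrix (Fin d) (Fin q) ℝ :=
      (fromRows (0 : Matrix (Fin (d-q)) (Fin q) ℝ) SQ⁻¹).submatrix ⇑eQ'.symm id with hN2
    have hAN1 : A * N1 = 1 := by
      rw [hA, hN1, Matrix.submatrix_mul_equiv, fromCols_mul_fromRows, hSP1]
      simp
    have hBN2 : B * N2 = 1 := by
      rw [hB, hN2, Matrix.submatrix_mul_equiv, fromCols_mul_fromRows, hSQ1]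
      simp
    have hAN2 : A * N2 = 0 := by
      ext i j
      rw [Matrix.mul_apply]
      apply Finset.sum_eq_zero
      intro k _
      simp only [hA, hN2, submatrix_apply, id_eq, heP, heQ', Equiv.symm_trans_apply,
        finCongr_symm, finCongr_apply, Matrix.zero_apply]
      rw [finSumFinEquiv_symm_eq', finSumFinEquiv_symm_eq']
      simp only [Fin.coe_cast]
      split_ifs with h1 h2 h3
      · simp
      · exfalso; omega
      · simp
      · simp
    have hBN1 : B * N1 = 0 := by
      ext i j
      rw [Matrix.mul_apply]
      apply Finset.sum_eq_zero
      intro k _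
      simp only [hB, hN1, submatrix_apply, id_eq, heP, heQ', Equiv.symm_trans_apply,
        finCongr_symm, finCongr_apply, Matrix.zero_apply]
      rw [finSumFinEquiv_symm_eq', finSumFinEquiv_symm_eq']
      simp only [Fin.coe_cast]
      split_ifs with h1 h2 h3
      · simp
      · simp
      · exfalso; omega
      · simp
    set U : Matrix (Fin p ⊕ Fin q) (Fin p ⊕ Fin q) ℝ :=
      fromBlocks UP 0 0 UQ with hU
    have hUtU : Uᵀ * U = 1 := by
      rw [hU, Matrix.fromBlocks_transpose, Matrix.fromBlocks_multiply]
      simp [hUP, hUQ, Matrix.fromBlocks_one]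
    set R : Matrix (Fin p ⊕ Fin q) (Fin d) ℝ := fromRows P (Q * F) with hR
    set M : Matrix (Fin p ⊕ Fin q) (Fin d) ℝ := fromRows A B with hM
    set N : Matrix (Fin d) (Fin p ⊕ Fin q) ℝ := fromCols N1 N2 with hN
    have hMN : M * N = 1 := by
      rw [hM, hN, fromRows_mul_fromCols, hAN1, hAN2, hBN1, hBN2,
        ← Matrix.fromBlocks_one]
    have hURV : U * R * VP = M := by
      rw [hU, hR, hM, Matrix.fromBlocks_mul_fromRows, fromRows_mul]
      simp only [Matrix.zero_mul, add_zero, zero_add]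
      refine (fromRows_ext_iff _ _ _ _).mpr ⟨hsvdP, ?_⟩
      calc UQ * (Q * F) * VP = UQ * (Q * F * VP) := by simp only [Matrix.mul_assoc]
        _ = B := by rw [hQFVP, ← Matrix.mul_assoc, hUQ', Matrix.one_mul]
    have hRVP : R * VP = Uᵀ * M := by
      rw [← hURV, ← Matrix.mul_assoc, ← Matrix.mul_assoc, hUtU, Matrix.one_mul]
    have hright : R * (VP * (N * U)) = 1 := by
      calc R * (VP * (N * U)) = ((R * VP) * N) * U := by simp only [Matrix.mul_assoc]
        _ = ((Uᵀ * M) * N) * U := by rw [hRVP]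
        _ = Uᵀ * (M * N) * U := by simp only [Matrix.mul_assoc]
        _ = 1 := by rw [hMN, Matrix.mul_one, hUtU]
    have hle : R.rank ≤ p + q := by
      have := R.rank_le_card_height
      simpa using this
    have hge : p + q ≤ R.rank := by
      have h1 : (R * (VP * (N * U))).rank ≤ R.rank := Matrix.rank_mul_le_left _ _
      rw [hright] at h1
      simpa using h1
    exact le_antisymm hle hge
end
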